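/- arXiv:2304.11471 — 3 statements merged into one kernel-verified Lean document; each statement's English description precedes it below -/
import Mathlib

section
/- Let p be a prime number with p ≡ 1 (mod 4) and let e be a positive integer. Then p^e divides v(n) for all integers n ≥ ⌈ep/2⌉. -/
/-- `Π₃(N) = ∏_{j=1}^{N} (4j−3)²`. -/
def Pi3 (N : ℕ) : ℤ := ∏ j ∈ Finset.Icc 1 N, (4 * (j : ℤ) - 3) ^ 2

/-- If there is a carry in the lowest base-`p` digit when adding `a` and `b`,
then `p` divides `(a+b).choose a`.  (A special case of Kummer's theorem,
proved here via Lucas' theorem.) -/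
lemma prime_dvd_choose_of_carry {p a b : ℕ} (hp : p.Prime)
    (h : p ≤ a % p + b % p) : p ∣ (a + b).choose a := by
  haveI : Fact p.Prime := ⟨hp⟩
  have hl := Choose.choose_modEq_choose_mod_mul_choose_div_nat (p := p) (n := a + b) (k := a)
  have h2 : a % p < p := Nat.mod_lt _ hp.pos
  have h3 : b % p < p := Nat.mod_lt _ hp.pos
  have hmod : (a + b) % p = a % p + b % p - p := by
    have h1 : (a + b) % p = (a % p + b % p) % p := by rw [Nat.add_mod]
    rw [h1, Nat.mod_eq_sub_mod h, Nat.mod_eq_of_lt (by omega)]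
  have hz : Nat.choose ((a + b) % p) (a % p) = 0 :=
    Nat.choose_eq_zero_of_lt (by omega)
  rw [hmod] at hz
  rw [hmod, hz, zero_mul] at hl
  exact (Nat.modEq_zero_iff_dvd).mp hl

/-- The key valuation bound for `Pi3`. -/
lemma pow_dvd_Pi3 {p : ℕ} (hp : p.Prime) (hp1 : p % 4 = 1) (n : ℕ) :
    (p : ℤ) ^ (2 * n / p) ∣ Pi3 n := by
  have hp5 : 5 ≤ p := by
    have := hp.two_le
    rcases Nat.lt_or_ge p 5 with h | h
    · interval_cases p <;> simp_all <;> omega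
    · exact h
  set g := 2 * n / p with hg
  set k := (g + 1) / 2 with hk
  set j0 := (p + 3) / 4 with hj0
  have h4j0 : 4 * j0 = p + 3 := by omega
  set T : Finset ℕ := (Finset.range k).image (fun i => j0 + i * p) with hT
  have hmem : ∀ i < k, j0 + i * p ∈ Finset.Icc 1 n := by
    intro i hi
    have h1 : 2 * i + 1 ≤ g := by omega
    have h2 : (2 * i + 1) * p ≤ g * p := Nat.mul_le_mul_right _ h1
    have h3 : g * p ≤ 2 * n := Nat.div_mul_le_self _ _
    have hX : 2 * (i * p) + p ≤ 2 * n := by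
      calc 2 * (i * p) + p = (2 * i + 1) * p := by ring
        _ ≤ g * p := h2
        _ ≤ 2 * n := h3
    rw [Finset.mem_Icc]
    constructor
    · omega
    · generalize i * p = X at hX ⊢
      omega
  have hTsub : T ⊆ Finset.Icc 1 n := by
    intro j hj
    rw [hT, Finset.mem_image] at hj
    obtain ⟨i, hi, rfl⟩ := hj
    exact hmem i (Finset.mem_range.mp hi)
  have hdvd2 : ∀ j ∈ T, ((p : ℤ)) ^ 2 ∣ (4 * (j : ℤ) - 3) ^ 2 := by
    intro j hj
    rw [hT, Finset.mem_image] at hj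
    obtain ⟨i, _, rfl⟩ := hj
    have hz : (4 * (j0 : ℤ)) = (p : ℤ) + 3 := by exact_mod_cast congrArg (Nat.cast : ℕ → ℤ) h4j0
    have hdd : (p : ℤ) ∣ 4 * ((j0 + i * p : ℕ) : ℤ) - 3 :=
      ⟨1 + 4 * i, by push_cast; linear_combination hz⟩
    exact pow_dvd_pow_of_dvd hdd 2
  have hcard : T.card = k := by
    rw [hT, Finset.card_image_of_injective, Finset.card_range]
    intro i1 i2 h
    simp only at h
    exact Nat.eq_of_mul_eq_mul_right hp.pos (Nat.add_left_cancel h)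
  have h1 : (p : ℤ) ^ (2 * k) ∣ ∏ j ∈ T, (4 * (j : ℤ) - 3) ^ 2 := by
    calc (p : ℤ) ^ (2 * k) = ∏ _j ∈ T, (p : ℤ) ^ 2 := by
          rw [Finset.prod_const, hcard, ← pow_mul, mul_comm]
      _ ∣ ∏ j ∈ T, (4 * (j : ℤ) - 3) ^ 2 :=
          Finset.prod_dvd_prod_of_dvd _ _ hdvd2
  have h2 : (∏ j ∈ T, (4 * (j : ℤ) - 3) ^ 2) ∣ Pi3 n :=
    Finset.prod_dvd_prod_of_subset _ _ _ hTsub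
  exact dvd_trans (dvd_trans (pow_dvd_pow _ (by omega : g ≤ 2 * k)) h1) h2

theorem romik_v_vanishes_mod_p_pow_one_mod_four
    (p : ℕ) (hp : p.Prime) (hp1 : p % 4 = 1) (e : ℕ) (he : 1 ≤ e)
    (v : ℕ → ℤ)
    (hv0 : v 0 = 1)
    (hv : ∀ n : ℕ, 1 ≤ n →
      2 * v n = 2 ^ n * Pi3 n - ∑ m ∈ Finset.Ico 1 n,
        ((2 * n).choose (2 * m) : ℤ) * v m * v (n - m)) :
    ∀ n : ℕ, (e * p + 1) / 2 ≤ n → (p : ℤ) ^ e ∣ v n := by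
  have hp5 : 5 ≤ p := by
    have := hp.two_le
    rcases Nat.lt_or_ge p 5 with h | h
    · interval_cases p <;> simp_all <;> omega
    · exact h
  have hcop : IsCoprime ((p : ℤ) ^ (2 * 1)) (2 : ℤ) := by
    refine IsCoprime.pow_left ?_
    have : IsCoprime ((p : ℕ) : ℤ) ((2 : ℕ) : ℤ) :=
      Nat.isCoprime_iff_coprime.mpr ((Nat.Prime.coprime_iff_not_dvd hp).mpr
        (fun h => by have := Nat.le_of_dvd two_pos h; omega))
    exact_mod_cast this
  have key : ∀ n : ℕ, (p : ℤ) ^ (2 * n / p) ∣ v n := by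
    intro n
    induction n using Nat.strong_induction_on with
    | _ n ih =>
      rcases Nat.eq_zero_or_pos n with rfl | hn
      · simp
      · have h2v := hv n hn
        have hdvd : (p : ℤ) ^ (2 * n / p) ∣ 2 * v n := by
          rw [h2v]
          apply dvd_sub
          · exact Dvd.dvd.mul_left (pow_dvd_Pi3 hp hp1 n) _
          · apply Finset.dvd_sum
            intro m hm
            rw [Finset.mem_Ico] at hm
            obtain ⟨hm1, hm2⟩ := hm
            have hsum : 2 * m + 2 * (n - m) = 2 * n := by omega
            have hdiv := Nat.add_div (a := 2 * m) (b := 2 * (n - m)) hp.pos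
            rw [hsum] at hdiv
            have ihm := ih m hm2
            have ihnm := ih (n - m) (by omega)
            by_cases hc : p ≤ 2 * m % p + 2 * (n - m) % p
            · rw [if_pos hc] at hdiv
              have hC : (p : ℤ) ∣ ((2 * n).choose (2 * m) : ℤ) := by
                have := prime_dvd_choose_of_carry hp (a := 2 * m) (b := 2 * (n - m)) hc
                rw [hsum] at this
                exact_mod_cast this
              calc (p : ℤ) ^ (2 * n / p)
                  = (p : ℤ) * (p : ℤ) ^ (2 * m / p) * (p : ℤ) ^ (2 * (n - m) / p) := by
                    rw [hdiv]; ring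
                _ ∣ ((2 * n).choose (2 * m) : ℤ) * v m * v (n - m) :=
                    mul_dvd_mul (mul_dvd_mul hC ihm) ihnm
            · rw [if_neg hc] at hdiv
              calc (p : ℤ) ^ (2 * n / p)
                  = (p : ℤ) ^ (2 * m / p) * (p : ℤ) ^ (2 * (n - m) / p) := by
                    rw [hdiv]; ring
                _ ∣ v m * v (n - m) := mul_dvd_mul ihm ihnm
                _ ∣ ((2 * n).choose (2 * m) : ℤ) * v m * v (n - m) := by
                    rw [mul_assoc]; exact Dvd.dvd.mul_left dvd_rfl _
        have hcop' : IsCoprime ((p : ℤ) ^ (2 * n / p)) (2 : ℤ) := by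
          refine IsCoprime.pow_left ?_
          have : IsCoprime ((p : ℕ) : ℤ) ((2 : ℕ) : ℤ) :=
            Nat.isCoprime_iff_coprime.mpr
              ((Nat.Prime.coprime_iff_not_dvd hp).mpr
                (fun h => by have := Nat.le_of_dvd two_pos h; omega))
          exact_mod_cast this
        exact hcop'.dvd_of_dvd_mul_left hdvd
  intro n hn
  have hen : e ≤ 2 * n / p := by
    rw [Nat.le_div_iff_mul_le hp.pos]
    omega
  exact dvd_trans (pow_dvd_pow _ hen) (key n)
end

section
/- Let p be an odd prime number. Then: (1) p divides u(ap+b) for all integers a, b with 1 ≤ a ≤ (p−1)/2 and 0 ≤ b ≤ a−1; (2) p divides u(ap + (p−1)/2 + b) for all integers a, b with 1 ≤ a ≤ (p−1)/2 and 0 ≤ b ≤ a; (3) if moreover p ≡ 3 (mod 4), then p divides u((p−1)/2). -/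
/-- `Π₁(N) = ∏_{j=1}^{N} (4j−1)²`. -/
def Pi1 (N : ℕ) : ℤ := ∏ j ∈ Finset.Icc 1 N, (4 * (j : ℤ) - 1) ^ 2

private lemma dvd_Pi1_of (p j N : ℕ) (hj : 1 ≤ j) (hjN : j ≤ N)
    (h : (p:ℤ) ∣ (4 * (j:ℤ) - 1)) : (p:ℤ) ∣ Pi1 N :=
  (dvd_pow h two_ne_zero).trans (Finset.dvd_prod_of_mem _ (Finset.mem_Icc.mpr ⟨hj, hjN⟩))

private lemma dvd_Pi3_of (p j N : ℕ) (hj : 1 ≤ j) (hjN : j ≤ N)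
    (h : (p:ℤ) ∣ (4 * (j:ℤ) - 3)) : (p:ℤ) ∣ Pi3 N :=
  (dvd_pow h two_ne_zero).trans (Finset.dvd_prod_of_mem _ (Finset.mem_Icc.mpr ⟨hj, hjN⟩))

private lemma dvd_Pi1_of_ge {p N : ℕ} (hodd : p % 2 = 1) (hpN : p ≤ N) : (p:ℤ) ∣ Pi1 N := by
  rcases (by omega : p % 4 = 1 ∨ p % 4 = 3) with h | h
  · refine dvd_Pi1_of p (3*(p/4)+1) N (by omega) (by omega) ?_
    have he : (4 * ((3*(p/4)+1 : ℕ) : ℤ) - 1) = 3*p := by push_cast; omega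
    rw [he]; exact dvd_mul_left _ _
  · refine dvd_Pi1_of p (p/4+1) N (by omega) (by omega) ?_
    have he : (4 * ((p/4+1 : ℕ) : ℤ) - 1) = p := by push_cast; omega
    rw [he]

private lemma dvd_Pi3_of_ge {p N : ℕ} (hodd : p % 2 = 1) (hpN : p ≤ N) : (p:ℤ) ∣ Pi3 N := by
  rcases (by omega : p % 4 = 1 ∨ p % 4 = 3) with h | h
  · refine dvd_Pi3_of p (p/4+1) N (by omega) (by omega) ?_
    have he : (4 * ((p/4+1 : ℕ) : ℤ) - 3) = p := by push_cast; omega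
    rw [he]
  · refine dvd_Pi3_of p (3*(p/4)+3) N (by omega) (by omega) ?_
    have he : (4 * ((3*(p/4)+3 : ℕ) : ℤ) - 3) = 3*p := by push_cast; omega
    rw [he]; exact dvd_mul_left _ _

private lemma dvd_Pi3_of_ge_half {p N : ℕ} (h1 : p % 4 = 1) (hN : p/4 + 1 ≤ N) :
    (p:ℤ) ∣ Pi3 N := by
  refine dvd_Pi3_of p (p/4+1) N (by omega) hN ?_
  have he : (4 * ((p/4+1 : ℕ) : ℤ) - 3) = p := by push_cast; omega
  rw [he]

private lemma divmod {p c r N : ℕ} (hp : 0 < p) (hN : N = c * p + r) (hr : r < p) :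
    N / p = c ∧ N % p = r := by
  subst hN
  constructor
  · rw [mul_comm, Nat.mul_add_div hp, Nat.div_eq_of_lt hr, Nat.add_zero]
  · rw [Nat.add_comm, Nat.add_mul_mod_self_right, Nat.mod_eq_of_lt hr]

private lemma dvd_choose_div {p : ℕ} (hp : p.Prime) {N K : ℕ}
    (h : p ∣ (N / p).choose (K / p)) : p ∣ N.choose K := by
  haveI : Fact p.Prime := ⟨hp⟩
  have hL := Choose.choose_modEq_choose_mod_mul_choose_div_nat (p := p) (n := N) (k := K)
  have h2 : p ∣ (N % p).choose (K % p) * ((N / p).choose (K / p)) := h.mul_left _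
  exact Nat.modEq_zero_iff_dvd.mp (hL.trans (Nat.modEq_zero_iff_dvd.mpr h2))

private lemma dvd_choose_mod {p : ℕ} (hp : p.Prime) {N K : ℕ}
    (h : N % p < K % p) : p ∣ N.choose K := by
  haveI : Fact p.Prime := ⟨hp⟩
  have hL := Choose.choose_modEq_choose_mod_mul_choose_div_nat (p := p) (n := N) (k := K)
  have h2 : p ∣ (N % p).choose (K % p) * ((N / p).choose (K / p)) := by
    simp [Nat.choose_eq_zero_of_lt h]
  exact Nat.modEq_zero_iff_dvd.mp (hL.trans (Nat.modEq_zero_iff_dvd.mpr h2))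

private lemma closerA {p x : ℕ} {y z : ℤ} (h : p ∣ x) : (p:ℤ) ∣ (x:ℤ) * y * z :=
  dvd_mul_of_dvd_left (dvd_mul_of_dvd_left (Int.natCast_dvd_natCast.mpr h) y) z

private lemma closerB {p : ℕ} {x y z : ℤ} (h : (p:ℤ) ∣ y) : (p:ℤ) ∣ x * y * z :=
  dvd_mul_of_dvd_left (h.mul_left x) z

private lemma closerC {p : ℕ} {x y z : ℤ} (h : (p:ℤ) ∣ z) : (p:ℤ) ∣ x * y * z :=
  h.mul_left _

private def Good (p q n : ℕ) : Prop :=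
  (∃ a b, 1 ≤ a ∧ a ≤ q ∧ b + 1 ≤ a ∧ n = a * p + b) ∨
  (∃ a b, 1 ≤ a ∧ a ≤ q ∧ b ≤ a ∧ n = a * p + q + b) ∨
  (p % 4 = 3 ∧ n = q)

private lemma main_dvd {p q : ℕ} (hp : p.Prime) (hq : p = 2 * q + 1) (hq1 : 1 ≤ q)
    (u : ℕ → ℤ)
    (hu : ∀ n : ℕ, 1 ≤ n →
      u n = Pi1 n - ∑ m ∈ Finset.range n,
        ((2 * n + 1).choose (2 * m + 1) : ℤ) * Pi3 (n - m) * u m) :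
    ∀ n : ℕ, Good p q n → (p : ℤ) ∣ u n := by
  intro n
  induction n using Nat.strong_induction_on with
  | _ n IH =>
  intro hGood
  have hp0 : 0 < p := by omega
  have hodd : p % 2 = 1 := by omega
  have h4 : p % 4 = 1 ∨ p % 4 = 3 := by omega
  rcases hGood with ⟨a, b, ha1, haq, hba, hn⟩ | ⟨a, b0, ha1, haq, hb0a, hn⟩ | ⟨h43, hn⟩
  · -- Claim (1): n = a*p + b, b+1 ≤ a ≤ q
    have hpn : p ≤ n := by
      have h1 : 1 * p ≤ a * p := Nat.mul_le_mul_right p ha1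
      rw [hn]; linarith
    rw [hu n (by omega)]
    refine dvd_sub (dvd_Pi1_of_ge hodd hpn) (Finset.dvd_sum ?_)
    intro m hmem
    have hmn : m < n := Finset.mem_range.mp hmem
    obtain ⟨c, d, hm, hd⟩ : ∃ c d, m = c * p + d ∧ d < p :=
      ⟨m / p, m % p, by rw [mul_comm]; exact (Nat.div_add_mod m p).symm, Nat.mod_lt _ hp0⟩
    obtain ⟨hNdiv, hNmod⟩ := divmod hp0 (show 2*n+1 = (2*a) * p + (2*b+1) by rw [hn]; ring)
      (by omega)
    by_cases hdq : d < q
    · -- K digits (2c, 2d+1)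
      obtain ⟨hKdiv, hKmod⟩ := divmod hp0 (show 2*m+1 = (2*c) * p + (2*d+1) by rw [hm]; ring)
        (by omega)
      by_cases hdb : b < d
      · exact closerA (dvd_choose_mod hp (by rw [hNmod, hKmod]; omega))
      · rcases lt_trichotomy c a with hca | hca | hca
        · -- Pi3 : n - m ≥ p
          have h1 : (c+1) * p ≤ a * p := Nat.mul_le_mul_right p (by omega)
          have hX : d ≤ b := by omega
          have h2 : m + p ≤ n := by rw [hn, hm]; linarith
          exact closerB (dvd_Pi3_of_ge hodd (by omega))
        · -- IH via Good(1)
          exact closerC (IH m hmn (Or.inl ⟨a, d, ha1, haq, by omega,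
            by rw [hm, hca]⟩))
        · exact closerA (dvd_choose_div hp
            (by rw [hNdiv, hKdiv, Nat.choose_eq_zero_of_lt (by omega)]; exact dvd_zero p))
    · -- d = q + e
      obtain ⟨e, hde⟩ : ∃ e, d = q + e := ⟨d - q, by omega⟩
      subst hde
      obtain ⟨hKdiv, hKmod⟩ := divmod hp0
        (show 2*m+1 = (2*c+1) * p + (2*e) by rw [hm, hq]; ring) (by omega)
      by_cases heb : b < e
      · exact closerA (dvd_choose_mod hp (by rw [hNmod, hKmod]; omega))
      · by_cases hca : a ≤ c
        · exact closerA (dvd_choose_div hp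
            (by rw [hNdiv, hKdiv, Nat.choose_eq_zero_of_lt (by omega)]; exact dvd_zero p))
        · by_cases he0 : e = 0
          · by_cases hc0 : c = 0
            · have hmq : m = q := by rw [hm, hc0, he0]; ring
              rcases h4 with h41 | h43
              · -- Pi3 with n - m ≥ q + 1 ≥ p/4 + 1
                have h1 : 1 * p ≤ a * p := Nat.mul_le_mul_right p ha1
                have h2 : m + (q + 1) ≤ n := by rw [hn, hmq]; linarith
                exact closerB (dvd_Pi3_of_ge_half h41 (by omega))
              · exact closerC (IH m hmn (Or.inr (Or.inr ⟨h43, hmq⟩)))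
            · -- Good(2) with a' = c, b' = 0
              exact closerC (IH m hmn (Or.inr (Or.inl ⟨c, 0, by omega, by omega, by omega,
                by rw [hm, he0]; ring⟩)))
          · by_cases hec : e ≤ c
            · exact closerC (IH m hmn (Or.inr (Or.inl ⟨c, e, by omega, by omega, hec,
                by rw [hm]; ring⟩)))
            · -- c < e ≤ b, so c + 2 ≤ a : Pi3
              have h1 : (c+2) * p ≤ a * p := Nat.mul_le_mul_right p (by omega)
              have hX : e ≤ b := by omega
              have h2 : m + p ≤ n := by rw [hn, hm]; linarith
              exact closerB (dvd_Pi3_of_ge hodd (by omega))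
  · -- Claim (2): n = a*p + q + b0, b0 ≤ a ≤ q
    have hpn : p ≤ n := by
      have h1 : 1 * p ≤ a * p := Nat.mul_le_mul_right p ha1
      rw [hn]; linarith
    rw [hu n (by omega)]
    refine dvd_sub (dvd_Pi1_of_ge hodd hpn) (Finset.dvd_sum ?_)
    intro m hmem
    have hmn : m < n := Finset.mem_range.mp hmem
    obtain ⟨c, d, hm, hd⟩ : ∃ c d, m = c * p + d ∧ d < p :=
      ⟨m / p, m % p, by rw [mul_comm]; exact (Nat.div_add_mod m p).symm, Nat.mod_lt _ hp0⟩
    rcases Nat.lt_or_ge a q with haq' | haq'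
    · -- a < q
      obtain ⟨hNdiv, hNmod⟩ := divmod hp0
        (show 2*n+1 = (2*a+1) * p + (2*b0) by rw [hn, hq]; ring) (by omega)
      by_cases hdq : d < q
      · obtain ⟨hKdiv, hKmod⟩ := divmod hp0
          (show 2*m+1 = (2*c) * p + (2*d+1) by rw [hm]; ring) (by omega)
        by_cases hdb : b0 ≤ d
        · exact closerA (dvd_choose_mod hp (by rw [hNmod, hKmod]; omega))
        · rcases lt_trichotomy c a with hca | hca | hca
          · have h1 : (c+1) * p ≤ a * p := Nat.mul_le_mul_right p (by omega)
            have hX : d ≤ q := by omega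
            have h2 : m + p ≤ n := by rw [hn, hm]; linarith
            exact closerB (dvd_Pi3_of_ge hodd (by omega))
          · exact closerC (IH m hmn (Or.inl ⟨a, d, ha1, haq, by omega, by rw [hm, hca]⟩))
          · exact closerA (dvd_choose_div hp
              (by rw [hNdiv, hKdiv, Nat.choose_eq_zero_of_lt (by omega)]; exact dvd_zero p))
      · obtain ⟨e, hde⟩ : ∃ e, d = q + e := ⟨d - q, by omega⟩
        subst hde
        obtain ⟨hKdiv, hKmod⟩ := divmod hp0
          (show 2*m+1 = (2*c+1) * p + (2*e) by rw [hm, hq]; ring) (by omega)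
        by_cases heb : b0 < e
        · exact closerA (dvd_choose_mod hp (by rw [hNmod, hKmod]; omega))
        · rcases lt_trichotomy c a with hca | hca | hca
          · have h1 : (c+1) * p ≤ a * p := Nat.mul_le_mul_right p (by omega)
            have hX : e ≤ b0 := by omega
            have h2 : m + p ≤ n := by rw [hn, hm]; linarith
            exact closerB (dvd_Pi3_of_ge hodd (by omega))
          · exact closerC (IH m hmn (Or.inr (Or.inl ⟨a, e, ha1, haq, by omega,
              by rw [hm, hca]; ring⟩)))
          · exact closerA (dvd_choose_div hp
              (by rw [hNdiv, hKdiv, Nat.choose_eq_zero_of_lt (by omega)]; exact dvd_zero p))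
    · -- a = q
      have haq2 : a = q := by omega
      obtain ⟨hNdiv, hNmod⟩ := divmod hp0
        (show 2*n+1 = p * p + (2*b0) by rw [hn, haq2, hq]; ring) (by omega)
      have hcq : c ≤ q := by
        by_contra hcq'
        have h1 : (q+1) * p ≤ c * p := Nat.mul_le_mul_right p (by omega)
        have h2 : q * p ≤ a * p := Nat.mul_le_mul_right p (by omega)
        have h3 : a * p ≤ q * p := Nat.mul_le_mul_right p (by omega)
        rw [hn] at hmn
        rw [hm] at hmn
        linarith
      by_cases hdq : d < q
      · obtain ⟨hKdiv, hKmod⟩ := divmod hp0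
          (show 2*m+1 = (2*c) * p + (2*d+1) by rw [hm]; ring) (by omega)
        by_cases hdb : b0 ≤ d
        · exact closerA (dvd_choose_mod hp (by rw [hNmod, hKmod]; omega))
        · by_cases hc0 : c = 0
          · have h1 : 1 * p ≤ a * p := Nat.mul_le_mul_right p ha1
            have h2 : m + p ≤ n := by rw [hn, hm, hc0]; simp; linarith
            exact closerB (dvd_Pi3_of_ge hodd (by omega))
          · refine closerA (dvd_choose_div hp ?_)
            rw [hNdiv, hKdiv]
            exact Nat.Prime.dvd_choose_self hp (by omega) (by omega)
      · obtain ⟨e, hde⟩ : ∃ e, d = q + e := ⟨d - q, by omega⟩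
        subst hde
        obtain ⟨hKdiv, hKmod⟩ := divmod hp0
          (show 2*m+1 = (2*c+1) * p + (2*e) by rw [hm, hq]; ring) (by omega)
        by_cases heb : b0 < e
        · exact closerA (dvd_choose_mod hp (by rw [hNmod, hKmod]; omega))
        · by_cases hcq2 : c = q
          · exact closerC (IH m hmn (Or.inr (Or.inl ⟨q, e, hq1, le_refl q, by omega,
              by rw [hm, hcq2]; ring⟩)))
          · refine closerA (dvd_choose_div hp ?_)
            rw [hNdiv, hKdiv]
            exact Nat.Prime.dvd_choose_self hp (by omega) (by omega)
  · -- Claim (3): n = q, p % 4 = 3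
    have hn1 : 1 ≤ n := by omega
    rw [hu n hn1]
    refine dvd_sub ?_ (Finset.dvd_sum ?_)
    · refine dvd_Pi1_of p (p/4+1) n (by omega) (by omega) ?_
      have he : (4 * ((p/4+1 : ℕ) : ℤ) - 1) = p := by push_cast; omega
      rw [he]
    · intro m hmem
      have hmn : m < n := Finset.mem_range.mp hmem
      refine closerA ?_
      rw [show 2*n+1 = p by omega]
      exact Nat.Prime.dvd_choose_self hp (by omega) (by omega)

theorem romik_u_small_divisibility
    (p : ℕ) (hp : p.Prime) (hodd : p ≠ 2)
    (u : ℕ → ℤ)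
    (hu0 : u 0 = 1)
    (hu : ∀ n : ℕ, 1 ≤ n →
      u n = Pi1 n - ∑ m ∈ Finset.range n,
        ((2 * n + 1).choose (2 * m + 1) : ℤ) * Pi3 (n - m) * u m) :
    (∀ a b : ℕ, 1 ≤ a → a ≤ (p - 1) / 2 → b ≤ a - 1 →
      (p : ℤ) ∣ u (a * p + b)) ∧
    (∀ a b : ℕ, 1 ≤ a → a ≤ (p - 1) / 2 → b ≤ a →
      (p : ℤ) ∣ u (a * p + (p - 1) / 2 + b)) ∧
    (p % 4 = 3 → (p : ℤ) ∣ u ((p - 1) / 2)) := by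
  have hodd2 : p % 2 = 1 := hp.eq_two_or_odd.resolve_left hodd
  have hp2 : 2 ≤ p := hp.two_le
  have hq : p = 2 * ((p - 1) / 2) + 1 := by omega
  have hq1 : 1 ≤ (p - 1) / 2 := by omega
  refine ⟨fun a b ha haq hb => ?_, fun a b ha haq hb => ?_, fun h43 => ?_⟩
  · exact main_dvd hp hq hq1 u hu _ (Or.inl ⟨a, b, ha, haq, by omega, rfl⟩)
  · exact main_dvd hp hq hq1 u hu _ (Or.inr (Or.inl ⟨a, b, ha, haq, hb, rfl⟩))
  · exact main_dvd hp hq hq1 u hu _ (Or.inr (Or.inr ⟨h43, rfl⟩))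
end

section
/- Let y : ℕ → ℤ be a sequence of integers with y(0) = 1. Then for every fixed n ≥ 0 and every positive integer e, the sequence k ↦ R^{−1}_y(k + 2n, k) is purely periodic modulo 2^e with (not necessarily minimal) period length 2^e; that is, for every k ≥ 0, R^{−1}_y(k + 2^e + 2n, k + 2^e) − R^{−1}_y(k + 2n, k) ∈ 2^e·ℤ. -/
open PowerSeries Finset
/-- The power series `U_y(t)/t`, where `U_y(t) = Σ_{j≥0} y(j) t^{2j+1}/(2j+1)!`;
its constant coefficient is `y(0)`. -/
noncomputable def UdivT (y : ℕ → ℤ) : PowerSeries ℚ :=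
  PowerSeries.mk fun j => if j % 2 = 0 then (y (j / 2) : ℚ) / (Nat.factorial (j + 1) : ℚ) else 0

section
variable (y : ℕ → ℤ) (hy0 : y 0 = 1)

lemma coeff_UdivT (j : ℕ) : PowerSeries.coeff j (UdivT y) =
    if j % 2 = 0 then (y (j / 2) : ℚ) / (Nat.factorial (j + 1) : ℚ) else 0 := by
  simp [UdivT]

include hy0 in
lemma constCoeff_UdivT : PowerSeries.constantCoeff (UdivT y) = 1 := by
  rw [← PowerSeries.coeff_zero_eq_constantCoeff, coeff_UdivT]
  simp [hy0]

include hy0 in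
lemma UdivT_mul_inv : (UdivT y) * (UdivT y)⁻¹ = 1 :=
  PowerSeries.mul_inv_cancel _ (by rw [constCoeff_UdivT y hy0]; norm_num)

lemma coeff_odd_UdivT {j : ℕ} (h : j % 2 = 1) : PowerSeries.coeff j (UdivT y) = 0 := by
  rw [coeff_UdivT]; simp [h]

lemma coeff_odd_pow {j : ℕ} (h : j % 2 = 1) (k : ℕ) :
    PowerSeries.coeff j ((UdivT y) ^ k) = 0 := by
  induction k generalizing j with
  | zero => simp [PowerSeries.coeff_one]; omega
  | succ k ih =>
    rw [pow_succ, mul_comm, PowerSeries.coeff_mul]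
    refine Finset.sum_eq_zero fun p hp => ?_
    rw [Finset.HasAntidiagonal.mem_antidiagonal] at hp
    rcases Nat.even_or_odd p.1 with h1 | h1
    · have h2 : p.2 % 2 = 1 := by rcases h1 with ⟨c, hc⟩; omega
      rw [ih h2, mul_zero]
    · rw [coeff_odd_UdivT y (Nat.odd_iff.mp h1), zero_mul]
end

section
variable (f g : PowerSeries ℚ) (hfg : f * g = 1)

include hfg in
lemma pow_mul_inv_pow (a b : ℕ) : f ^ a * g ^ (a + b) = g ^ b := by
  rw [pow_add, ← mul_assoc, ← mul_pow, hfg, one_pow, one_mul]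

include hfg in
lemma deriv_g : d⁄dX ℚ g = -(g ^ 2 * d⁄dX ℚ f) := by
  have h0 : d⁄dX ℚ (f * g) = 0 := by rw [hfg]; exact Derivation.map_one_eq_zero _
  rw [Derivation.leibniz] at h0
  have h1 := congrArg (g * ·) h0
  simp only [smul_eq_mul, mul_add, mul_zero] at h1
  -- g * (f * Dg) + g * (g * Df) = 0
  have h2 : g * (f * d⁄dX ℚ g) = d⁄dX ℚ g := by
    rw [← mul_assoc, mul_comm g f, hfg, one_mul]
  rw [h2] at h1
  have : g * (g * d⁄dX ℚ f) = g ^ 2 * d⁄dX ℚ f := by ring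
  rw [this] at h1
  linear_combination h1

-- coefficient of X * derivative
lemma coeff_X_mul_deriv (φ : PowerSeries ℚ) (i : ℕ) :
    PowerSeries.coeff i (PowerSeries.X * d⁄dX ℚ φ) = i * PowerSeries.coeff i φ := by
  cases i with
  | zero =>
    simp
  | succ j =>
    rw [PowerSeries.coeff_succ_X_mul, PowerSeries.coeff_derivative]
    push_cast; ring
end

section core
variable (f g : PowerSeries ℚ) (hfg : f * g = 1)

include hfg in
lemma core_sum_zero (k M : ℕ) (hM : 1 ≤ M) :
    ∑ i ∈ Finset.range (M+1),
      ((k:ℚ) + i) * PowerSeries.coeff i (f ^ k) * PowerSeries.coeff (M - i) (g ^ (k + M)) = 0 := by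
  set N := k + M with hN
  set E : PowerSeries ℚ := (k : PowerSeries ℚ) * (f ^ k * g ^ N)
      + (PowerSeries.X * d⁄dX ℚ (f ^ k)) * g ^ N with hE
  -- Step A : coeff M E = the sum
  have stepA : PowerSeries.coeff M E = ∑ i ∈ Finset.range (M+1),
      ((k:ℚ) + i) * PowerSeries.coeff i (f ^ k) * PowerSeries.coeff (M - i) (g ^ N) := by
    have hcast : (k : PowerSeries ℚ) = PowerSeries.C (k : ℚ) := by
      rw [map_natCast]
    rw [hE, map_add, hcast, ← mul_assoc]
    rw [mul_comm (PowerSeries.C (k:ℚ)) (f ^ k), mul_assoc]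
    rw [PowerSeries.coeff_mul, PowerSeries.coeff_mul]
    rw [Finset.Nat.sum_antidiagonal_eq_sum_range_succ_mk,
      Finset.Nat.sum_antidiagonal_eq_sum_range_succ_mk, ← Finset.sum_add_distrib]
    refine Finset.sum_congr rfl fun i _ => ?_
    rw [PowerSeries.coeff_C_mul, coeff_X_mul_deriv]
    ring
  -- Step B : E = k * (g^M + X * Df * g^(M+1))
  have stepB : E = (k : PowerSeries ℚ) * (g ^ M + PowerSeries.X * d⁄dX ℚ f * g ^ (M+1)) := by
    cases k with
    | zero =>
      simp only [hE, Nat.cast_zero, zero_mul, zero_add, pow_zero, Derivation.map_one_eq_zero,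
        mul_zero]
    | succ k' =>
      have hD : d⁄dX ℚ (f ^ (k'+1)) = (k'+1 : ℕ) • (f ^ k' • d⁄dX ℚ f) := by
        simpa using Derivation.leibniz_pow (d⁄dX ℚ) (a := f) (k'+1)
      rw [hE, hD]
      have h1 : f ^ (k'+1) * g ^ N = g ^ M := pow_mul_inv_pow f g hfg (k'+1) M
      have h2 : f ^ k' * g ^ N = g ^ (M+1) := by
        have := pow_mul_inv_pow f g hfg k' (M+1)
        rw [← this, hN]; ring
      calc (↑(k' + 1) : PowerSeries ℚ) * (f ^ (k'+1) * g ^ N)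
            + PowerSeries.X * ((k'+1 : ℕ) • (f ^ k' • d⁄dX ℚ f)) * g ^ N
          = (↑(k' + 1) : PowerSeries ℚ) *
            (f ^ (k'+1) * g ^ N + PowerSeries.X * d⁄dX ℚ f * (f ^ k' * g ^ N)) := by
            simp only [nsmul_eq_mul, smul_eq_mul]; push_cast; ring
        _ = _ := by rw [h1, h2]
  -- Step C : coeff M (X * Df * g^(M+1)) = - coeff M (g^M)
  have stepC : PowerSeries.coeff M (PowerSeries.X * d⁄dX ℚ f * g ^ (M+1))
      = - PowerSeries.coeff M (g ^ M) := by
    have hDg : d⁄dX ℚ (g ^ M) = (M : ℕ) • (g ^ (M-1) • d⁄dX ℚ g) :=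
      Derivation.leibniz_pow (d⁄dX ℚ) (a := g) M
    have hgpow : g ^ (M-1) * g ^ 2 = g ^ (M+1) := by
      rw [← pow_add]; congr 1; omega
    have hXD : PowerSeries.X * d⁄dX ℚ (g ^ M)
        = -((M : PowerSeries ℚ) * (PowerSeries.X * d⁄dX ℚ f * g ^ (M+1))) := by
      rw [hDg, deriv_g f g hfg]
      simp only [nsmul_eq_mul, smul_eq_mul]
      rw [← hgpow]; push_cast; ring
    have hc := congrArg (PowerSeries.coeff M) hXD
    rw [coeff_X_mul_deriv] at hc
    rw [map_neg] at hc
    have hcast : (M : PowerSeries ℚ) = PowerSeries.C (M : ℚ) := by rw [map_natCast]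
    rw [hcast, PowerSeries.coeff_C_mul] at hc
    have hM0 : (M : ℚ) ≠ 0 := by positivity
    have h3 : (M:ℚ) * PowerSeries.coeff M (PowerSeries.X * d⁄dX ℚ f * g ^ (M+1))
        = (M:ℚ) * (- PowerSeries.coeff M (g ^ M)) := by linarith [hc]
    exact mul_left_cancel₀ hM0 h3
  -- combine
  rw [← stepA, stepB]
  have hcast : (k : PowerSeries ℚ) = PowerSeries.C (k : ℚ) := by rw [map_natCast]
  rw [hcast, PowerSeries.coeff_C_mul, map_add, stepC]
  ring
end core

lemma sum_even_only (φ : ℕ → ℚ) (h : ∀ j, j % 2 = 1 → φ j = 0) (n : ℕ) :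
    ∑ i ∈ Finset.range (2*n+1), φ i = ∑ m ∈ Finset.range (n+1), φ (2*m) := by
  induction n with
  | zero => simp
  | succ n ih =>
    have e1 : 2*(n+1)+1 = (2*n+1)+1+1 := by omega
    rw [e1, Finset.sum_range_succ, Finset.sum_range_succ, ih, Finset.sum_range_succ]
    have h1 : φ (2*n+1) = 0 := h _ (by omega)
    have e2 : 2*n+1+1 = 2*(n+1) := by omega
    rw [h1, e2]
    conv_rhs => rw [Finset.sum_range_succ, Finset.sum_range_succ]
    ring

/-- `R⁻¹_y(n,k) = 2^{⌊(n−k)/2⌋}·(n−1)!/(k−1)!·[t^{n−k}] (U_y(t)/t)^{−n}` for `n, k ≥ 1`,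
with `R⁻¹_y(0,0) = 1` and `R⁻¹_y(n,0) = 0` for `n ≥ 1`. -/
noncomputable def RinvQ (y : ℕ → ℤ) (n k : ℕ) : ℚ :=
  if k = 0 then (if n = 0 then 1 else 0)
  else 2 ^ ((n - k) / 2) * (Nat.factorial (n - 1) : ℚ) / (Nat.factorial (k - 1) : ℚ) *
    PowerSeries.coeff (n - k) (((UdivT y)⁻¹) ^ n)

noncomputable def Sfun (y : ℕ → ℤ) (m k : ℕ) : ℚ :=
  2 ^ m * (Nat.factorial (k + 2*m) : ℚ) / (Nat.factorial k : ℚ) *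
    PowerSeries.coeff (2*m) ((UdivT y) ^ k)

section main
variable (y : ℕ → ℤ) (hy0 : y 0 = 1)

lemma RinvQ_eval (k m n : ℕ) (hm : m ≤ n) :
    RinvQ y (k+1+2*n) (k+1+2*m) =
      2^(n-m) * (Nat.factorial (k+2*n) : ℚ) / (Nat.factorial (k+2*m) : ℚ) *
        PowerSeries.coeff (2*(n-m)) (((UdivT y)⁻¹) ^ (k+1+2*n)) := by
  have h0 : k+1+2*m ≠ 0 := by omega
  rw [RinvQ, if_neg h0]
  have e1 : k+1+2*n - (k+1+2*m) = 2*(n-m) := by omega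
  have e2 : k+1+2*n - 1 = k+2*n := by omega
  have e3 : k+1+2*m - 1 = k+2*m := by omega
  rw [e1, e2, e3]
  have e4 : 2*(n-m)/2 = n-m := by omega
  rw [e4]

include hy0 in
lemma constCoeff_inv_UdivT : PowerSeries.constantCoeff ((UdivT y)⁻¹) = 1 := by
  rw [PowerSeries.constantCoeff_inv, constCoeff_UdivT y hy0, inv_one]

include hy0 in
lemma Sfun_zero (k : ℕ) : Sfun y 0 k = 1 := by
  rw [Sfun]
  simp only [mul_zero, add_zero, pow_zero, one_mul]
  rw [PowerSeries.coeff_zero_eq_constantCoeff, map_pow, constCoeff_UdivT y hy0, one_pow]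
  have : (Nat.factorial k : ℚ) ≠ 0 := Nat.cast_ne_zero.mpr (Nat.factorial_ne_zero k)
  field_simp

include hy0 in
lemma star_term (k m n : ℕ) (hm : m ≤ n) :
    RinvQ y (k+1+2*n) (k+1+2*m) * Sfun y m (k+1)
      = (2^n * (Nat.factorial (k+2*n) : ℚ) / (Nat.factorial (k+1) : ℚ)) *
        ((((k+1:ℕ)):ℚ) + ((2*m : ℕ):ℚ)) * PowerSeries.coeff (2*m) ((UdivT y) ^ (k+1)) *
          PowerSeries.coeff (2*n - 2*m) (((UdivT y)⁻¹) ^ (k+1+2*n)) := by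
  rw [RinvQ_eval y k m n hm, Sfun]
  have hfacm : (Nat.factorial (k+2*m) : ℚ) ≠ 0 := Nat.cast_ne_zero.mpr (Nat.factorial_ne_zero _)
  have hfack1 : (Nat.factorial (k+1) : ℚ) ≠ 0 := Nat.cast_ne_zero.mpr (Nat.factorial_ne_zero _)
  have h2m : ((2:ℚ))^m ≠ 0 := by positivity
  have hfact : (Nat.factorial (k+1+2*m) : ℚ)
      = ((k+1+2*m : ℕ) : ℚ) * (Nat.factorial (k+2*m) : ℚ) := by
    have e : k+1+2*m = (k+2*m) + 1 := by omega
    rw [e, Nat.factorial_succ]; push_cast; ring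
  have e5 : k+1+(2*m) = k+1+2*m := by omega
  have e6 : 2*(n-m) = 2*n - 2*m := by omega
  have e7 : ((2:ℚ))^(n-m) = 2^n / 2^m := by
    rw [eq_div_iff h2m, ← pow_add]; congr 1; omega
  rw [e5, e6, e7, hfact]
  field_simp
  push_cast
  ring

include hy0 in
lemma star (k n : ℕ) (hn : 1 ≤ n) :
    ∑ m ∈ Finset.range (n+1), RinvQ y (k+1+2*n) (k+1+2*m) * Sfun y m (k+1) = 0 := by
  have hfg : UdivT y * (UdivT y)⁻¹ = 1 := UdivT_mul_inv y hy0
  have key := core_sum_zero (UdivT y) ((UdivT y)⁻¹) hfg (k+1) (2*n) (by omega)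
  set C : ℚ := 2^n * (Nat.factorial (k+2*n) : ℚ) / (Nat.factorial (k+1) : ℚ) with hC
  have main : ∑ m ∈ Finset.range (n+1), RinvQ y (k+1+2*n) (k+1+2*m) * Sfun y m (k+1)
      = C * ∑ m ∈ Finset.range (n+1),
          ((((k+1:ℕ)):ℚ) + ((2*m : ℕ):ℚ)) * PowerSeries.coeff (2*m) ((UdivT y) ^ (k+1)) *
            PowerSeries.coeff (2*n - 2*m) (((UdivT y)⁻¹) ^ (k+1+2*n)) := by
    rw [Finset.mul_sum]
    refine Finset.sum_congr rfl fun m hm => ?_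
    rw [Finset.mem_range] at hm
    rw [star_term y hy0 k m n (by omega)]
    ring
  have h2 : ∑ i ∈ Finset.range (2*n+1),
        ((((k+1:ℕ)):ℚ) + (i:ℚ)) * PowerSeries.coeff i ((UdivT y) ^ (k+1)) *
          PowerSeries.coeff (2*n - i) (((UdivT y)⁻¹) ^ (k+1+2*n))
      = ∑ m ∈ Finset.range (n+1),
        ((((k+1:ℕ)):ℚ) + ((2*m : ℕ):ℚ)) * PowerSeries.coeff (2*m) ((UdivT y) ^ (k+1)) *
          PowerSeries.coeff (2*n - 2*m) (((UdivT y)⁻¹) ^ (k+1+2*n)) := by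
    exact sum_even_only _ (fun j hj => by
      simp only [coeff_odd_pow y hj, mul_zero, zero_mul]) n
  rw [main, ← h2, key, mul_zero]

noncomputable def wS (y : ℕ → ℤ) : PowerSeries ℚ := UdivT y - 1

noncomputable def cW (y : ℕ → ℤ) (m i : ℕ) : ℚ :=
  2^m * (Nat.factorial (2*m+i) : ℚ) / (Nat.factorial i : ℚ) *
    PowerSeries.coeff (2*m) ((wS y) ^ i)

include hy0 in
lemma coeff_wS_zero : PowerSeries.coeff 0 (wS y) = 0 := by
  rw [wS, map_sub, PowerSeries.coeff_zero_eq_constantCoeff, constCoeff_UdivT y hy0]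
  simp

lemma coeff_wS_one : PowerSeries.coeff 1 (wS y) = 0 := by
  rw [wS, map_sub, coeff_odd_UdivT y (by norm_num), PowerSeries.coeff_one]
  norm_num

include hy0 in
lemma wpow_coeff_zero : ∀ i r, r < 2*i → PowerSeries.coeff r ((wS y) ^ i) = 0 := by
  intro i
  induction i with
  | zero => intro r hr; omega
  | succ i ih =>
    intro r hr
    rw [pow_succ, mul_comm, PowerSeries.coeff_mul]
    refine Finset.sum_eq_zero fun p hp => ?_
    rw [Finset.HasAntidiagonal.mem_antidiagonal] at hp
    rcases Nat.lt_or_ge p.1 2 with h1 | h1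
    · interval_cases h : p.1
      · rw [coeff_wS_zero y hy0, zero_mul]
      · rw [coeff_wS_one y, zero_mul]
    · have : p.2 < 2*i := by omega
      rw [ih p.2 this, mul_zero]

lemma coeff_pow_expand (m k : ℕ) :
    PowerSeries.coeff (2*m) ((UdivT y) ^ k) =
      ∑ i ∈ Finset.range (k+1), (Nat.choose k i : ℚ) * PowerSeries.coeff (2*m) ((wS y) ^ i) := by
  have hU : UdivT y = wS y + 1 := by rw [wS]; ring
  rw [hU, add_pow, map_sum]
  refine Finset.sum_congr rfl fun i _ => ?_
  rw [one_pow, mul_one]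
  have : ((Nat.choose k i : ℕ) : PowerSeries ℚ) = PowerSeries.C ((Nat.choose k i : ℕ) : ℚ) := by
    rw [map_natCast]
  rw [this, PowerSeries.coeff_mul_C]
  ring

include hy0 in
lemma Sfun_expand (m k : ℕ) :
    Sfun y m k = ∑ i ∈ Finset.range (m+1),
      cW y m i * (Nat.choose (k+2*m) (2*m+i) : ℚ) := by
  have hfk : (Nat.factorial k : ℚ) ≠ 0 := Nat.cast_ne_zero.mpr (Nat.factorial_ne_zero _)
  have step0 : Sfun y m k = ∑ i ∈ Finset.range (k+1),
      2^m * (Nat.factorial (k+2*m) : ℚ) / (Nat.factorial k : ℚ) * (Nat.choose k i : ℚ) *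
        PowerSeries.coeff (2*m) ((wS y) ^ i) := by
    rw [Sfun, coeff_pow_expand, Finset.mul_sum]
    refine Finset.sum_congr rfl fun i _ => ?_
    ring
  -- termwise identity valid for all i
  have hterm : ∀ i : ℕ,
      2^m * (Nat.factorial (k+2*m) : ℚ) / (Nat.factorial k : ℚ) * (Nat.choose k i : ℚ) *
        PowerSeries.coeff (2*m) ((wS y) ^ i)
      = cW y m i * (Nat.choose (k+2*m) (2*m+i) : ℚ) := by
    intro i
    rcases le_or_gt i k with hik | hik
    · have h1 : (Nat.choose k i : ℚ) = (Nat.factorial k : ℚ) /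
          ((Nat.factorial i : ℚ) * (Nat.factorial (k-i) : ℚ)) := Nat.cast_choose ℚ hik
      have h2 : (Nat.choose (k+2*m) (2*m+i) : ℚ) = (Nat.factorial (k+2*m) : ℚ) /
          ((Nat.factorial (2*m+i) : ℚ) * (Nat.factorial (k-i) : ℚ)) := by
        have := Nat.cast_choose ℚ (show 2*m+i ≤ k+2*m by omega)
        rwa [show k+2*m - (2*m+i) = k - i by omega] at this
      rw [cW, h1, h2]
      have hfi : (Nat.factorial i : ℚ) ≠ 0 := Nat.cast_ne_zero.mpr (Nat.factorial_ne_zero _)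
      have hfki : (Nat.factorial (k-i) : ℚ) ≠ 0 := Nat.cast_ne_zero.mpr (Nat.factorial_ne_zero _)
      have hf2mi : (Nat.factorial (2*m+i) : ℚ) ≠ 0 := Nat.cast_ne_zero.mpr (Nat.factorial_ne_zero _)
      field_simp
    · rw [Nat.choose_eq_zero_of_lt hik, Nat.choose_eq_zero_of_lt (show k+2*m < 2*m+i by omega)]
      push_cast
      ring
  rw [step0]
  have hsub1 : Finset.range (k+1) ⊆ Finset.range (k+m+1) := by
    intro x hx; rw [Finset.mem_range] at *; omega
  rw [Finset.sum_subset hsub1 (fun x _ hx => by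
    rw [Finset.mem_range, not_lt] at hx
    rw [Nat.choose_eq_zero_of_lt (show k < x by rw [Finset.mem_range] at *; omega)]
    push_cast; ring)]
  rw [Finset.sum_congr rfl (fun i _ => hterm i)]
  have hsub2 : Finset.range (m+1) ⊆ Finset.range (k+m+1) := by
    intro x hx; rw [Finset.mem_range] at *; omega
  rw [← Finset.sum_subset hsub2 (fun x hx1 hx2 => by
    rw [Finset.mem_range, not_lt] at hx2
    rw [cW, wpow_coeff_zero y hy0 x (2*m) (by omega)]
    ring)]

lemma egf_int (V : PowerSeries ℚ) (a : ℕ → ℤ)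
    (ha : ∀ d, PowerSeries.coeff d V = (a d : ℚ) / (Nat.factorial d : ℚ))
    (ha0 : a 0 = 0) :
    ∀ i n, ∃ z : ℤ, (Nat.factorial n : ℚ) / (Nat.factorial i : ℚ) *
      PowerSeries.coeff n (V ^ i) = (z : ℚ) := by
  have hV0 : PowerSeries.constantCoeff V = 0 := by
    rw [← PowerSeries.coeff_zero_eq_constantCoeff, ha 0, ha0]; norm_num
  intro i
  induction i with
  | zero =>
    intro n
    cases n with
    | zero => exact ⟨1, by simp⟩
    | succ n => exact ⟨0, by simp [PowerSeries.coeff_one]⟩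
  | succ i ih =>
    intro n
    cases n with
    | zero =>
      refine ⟨0, ?_⟩
      rw [PowerSeries.coeff_zero_eq_constantCoeff, map_pow, hV0, zero_pow (by omega)]
      simp
    | succ n' =>
      choose zf hzf using ih
      refine ⟨∑ d ∈ Finset.range (n'+1), a (n'-d+1) * (Nat.choose n' d) * zf d, ?_⟩
      have hD : PowerSeries.coeff (n'+1) (V^(i+1)) * ((n'+1 : ℕ):ℚ)
          = ((i+1:ℕ):ℚ) * ∑ d ∈ Finset.range (n'+1),
              PowerSeries.coeff d (V^i) * ((a (n'-d+1) : ℚ) / (Nat.factorial (n'-d) : ℚ)) := by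
        have h1 := Derivation.leibniz_pow (d⁄dX ℚ) (a := V) (i+1)
        have h2 := congrArg (PowerSeries.coeff n') h1
        rw [PowerSeries.coeff_derivative] at h2
        simp only [Nat.add_sub_cancel, smul_eq_mul, nsmul_eq_mul] at h2
        push_cast
        rw [h2]
        have hc : ((i+1 : ℕ) : PowerSeries ℚ) = PowerSeries.C ((i+1 : ℕ) : ℚ) := by
          rw [map_natCast]
        rw [hc, PowerSeries.coeff_C_mul]
        rw [PowerSeries.coeff_mul]
        rw [Finset.Nat.sum_antidiagonal_eq_sum_range_succ_mk]
        push_cast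
        congr 1
        refine Finset.sum_congr rfl fun d hd => ?_
        rw [PowerSeries.coeff_derivative, ha (n'-d+1), Nat.factorial_succ (n'-d)]
        have h3 : ((n'-d).factorial : ℚ) ≠ 0 := Nat.cast_ne_zero.mpr (Nat.factorial_ne_zero _)
        have h4 : ((n'-d : ℕ) : ℚ) + 1 ≠ 0 := by positivity
        push_cast
        field_simp
      set S := ∑ d ∈ Finset.range (n'+1), PowerSeries.coeff d (V^i) *
          ((a (n'-d+1) : ℚ) / (Nat.factorial (n'-d) : ℚ)) with hS
      have hn1 : ((n'+1:ℕ):ℚ) ≠ 0 := Nat.cast_ne_zero.mpr (by omega)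
      have hco : PowerSeries.coeff (n'+1) (V^(i+1)) = ((i+1:ℕ):ℚ) * S / ((n'+1:ℕ):ℚ) := by
        rw [eq_div_iff hn1]; exact hD
      have hfi : (Nat.factorial i : ℚ) ≠ 0 := Nat.cast_ne_zero.mpr (Nat.factorial_ne_zero _)
      have hfn : (Nat.factorial n' : ℚ) ≠ 0 := Nat.cast_ne_zero.mpr (Nat.factorial_ne_zero _)
      have hi1 : ((i+1:ℕ):ℚ) ≠ 0 := Nat.cast_ne_zero.mpr (by omega)
      have hR : ((∑ d ∈ Finset.range (n'+1), a (n'-d+1) * (Nat.choose n' d) * zf d : ℤ) : ℚ)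
          = (Nat.factorial n' : ℚ) / (Nat.factorial i : ℚ) * S := by
        rw [hS, Finset.mul_sum]
        push_cast
        refine Finset.sum_congr rfl fun d hd => ?_
        rw [Finset.mem_range] at hd
        rw [← hzf d, Nat.cast_choose ℚ (show d ≤ n' by omega)]
        have h5 : ((n'-d).factorial : ℚ) ≠ 0 := Nat.cast_ne_zero.mpr (Nat.factorial_ne_zero _)
        have h6 : (Nat.factorial d : ℚ) ≠ 0 := Nat.cast_ne_zero.mpr (Nat.factorial_ne_zero _)
        field_simp
      rw [hR, hco, Nat.factorial_succ n', Nat.factorial_succ i]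
      push_cast
      field_simp

include hy0 in
lemma cW_div (m i : ℕ) : ∃ z : ℤ, cW y m i = 2^m * (z:ℚ) := by
  classical
  set a : ℕ → ℤ := fun d => if d % 2 = 1 ∧ 3 ≤ d then y ((d-1)/2) else 0 with haDef
  set V : PowerSeries ℚ := PowerSeries.X * wS y with hV
  have ha : ∀ d, PowerSeries.coeff d V = (a d : ℚ) / (Nat.factorial d : ℚ) := by
    intro d
    cases d with
    | zero =>
      rw [hV, PowerSeries.coeff_zero_eq_constantCoeff, map_mul, PowerSeries.constantCoeff_X,
        zero_mul]
      simp [haDef]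
    | succ e =>
      rw [hV, PowerSeries.coeff_succ_X_mul, wS, map_sub]
      rcases Nat.lt_or_ge e 2 with he | he
      · interval_cases e
        · rw [coeff_UdivT]
          simp [haDef, hy0, PowerSeries.coeff_one]
        · rw [coeff_odd_UdivT y (by norm_num)]
          simp [haDef, PowerSeries.coeff_one]
      · rcases Nat.even_or_odd e with h1 | h1
        · have h2 : e % 2 = 0 := Nat.even_iff.mp h1
          rw [coeff_UdivT, if_pos h2, PowerSeries.coeff_one, if_neg (by omega)]
          have h3 : a (e+1) = y (e/2) := by
            have hcond : (e+1) % 2 = 1 ∧ 3 ≤ e+1 := by omega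
            show (if (e+1) % 2 = 1 ∧ 3 ≤ e+1 then y ((e+1-1)/2) else 0) = y (e/2)
            rw [if_pos hcond]
            norm_num
          rw [h3]
          push_cast
          ring
        · have h2 : e % 2 = 1 := Nat.odd_iff.mp h1
          rw [coeff_odd_UdivT y h2, PowerSeries.coeff_one, if_neg (by omega)]
          have h3 : a (e+1) = 0 := by
            show (if (e+1) % 2 = 1 ∧ 3 ≤ e+1 then y ((e+1-1)/2) else 0) = 0
            rw [if_neg (by omega)]
          rw [h3]
          push_cast
          ring
  have ha0 : a 0 = 0 := by rw [haDef]; norm_num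
  obtain ⟨z, hz⟩ := egf_int V a ha ha0 i (2*m+i)
  refine ⟨z, ?_⟩
  rw [cW]
  have hcoeff : PowerSeries.coeff (2*m) ((wS y)^i) = PowerSeries.coeff (2*m+i) (V^i) := by
    rw [hV, mul_pow, PowerSeries.coeff_X_pow_mul]
  rw [hcoeff]
  rw [← hz]
  ring

lemma three_m_lt (m : ℕ) : 3*m < 2^(m+1) := by
  induction m with
  | zero => norm_num
  | succ m ih =>
    have hp : (2:ℕ)^(m+1+1) = 2 * 2^(m+1) := by ring
    have h2 : 2 ≤ 2^(m+1) := by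
      calc 2 = 2^1 := by norm_num
        _ ≤ 2^(m+1) := Nat.pow_le_pow_right (by norm_num) (by omega)
    omega

lemma two_pow_dvd (e m r : ℕ) (hr : 1 ≤ r) (hr2 : r < 2^(m+1)) :
    2^e ∣ 2^m * Nat.choose (2^e) r := by
  rcases le_or_gt e m with h | h
  · exact dvd_mul_of_dvd_left (pow_dvd_pow 2 h) _
  obtain ⟨v, u, hu, hruv⟩ := Nat.exists_eq_pow_mul_and_not_dvd (show r ≠ 0 by omega) 2 (by norm_num)
  have hu1 : 1 ≤ u := by
    rcases Nat.eq_zero_or_pos u with h0 | h0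
    · subst h0; simp at hruv; omega
    · exact h0
  have hvm : v ≤ m := by
    by_contra hv
    have h5 : 2^(m+1) ≤ 2^v := Nat.pow_le_pow_right (by norm_num) (by omega)
    have h6 : 2^v ≤ r := by rw [hruv]; exact Nat.le_mul_of_pos_right _ hu1
    omega
  have hkum : 2^e * Nat.choose (2^e - 1) (r - 1) = Nat.choose (2^e) r * r := by
    have h1 := Nat.add_one_mul_choose_eq (2^e - 1) (r - 1)
    have he1 : 1 ≤ 2^e := Nat.one_le_two_pow
    have h2 : 2^e - 1 + 1 = 2^e := by omega
    have h3 : r - 1 + 1 = r := by omega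
    rwa [h2, h3] at h1
  have key : Nat.choose (2^e) r * u * 2^v = 2^e * Nat.choose (2^e - 1) (r-1) := by
    rw [hkum]
    nth_rewrite 3 [hruv]
    ring
  have hdvd : 2^(e-v) ∣ Nat.choose (2^e) r := by
    have h4 : 2^(e-v) * 2^v ∣ Nat.choose (2^e) r * u * 2^v := by
      rw [← pow_add, show e-v+v = e by omega]
      exact ⟨Nat.choose (2^e - 1) (r-1), key⟩
    have h5 : 2^(e-v) ∣ Nat.choose (2^e) r * u :=
      (Nat.mul_dvd_mul_iff_right (show 0 < 2^v by positivity)).mp h4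
    have hcop : Nat.Coprime (2^(e-v)) u :=
      Nat.Coprime.pow_left _ ((Nat.Prime.coprime_iff_not_dvd Nat.prime_two).mpr hu)
    exact hcop.dvd_of_dvd_mul_right h5
  obtain ⟨c, hc⟩ := hdvd
  refine ⟨2^(m-v) * c, ?_⟩
  rw [hc]
  calc 2^m * (2^(e-v)*c) = (2^m * 2^(e-v)) * c := by ring
    _ = (2^e * 2^(m-v)) * c := by rw [← pow_add, ← pow_add, show m+(e-v) = e+(m-v) by omega]
    _ = 2^e * (2^(m-v)*c) := by ring

lemma choose_diff (a R e : ℕ) :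
    (Nat.choose (a + 2^e) R : ℤ) - (Nat.choose a R : ℤ)
      = ∑ i ∈ Finset.range R, (Nat.choose (2^e) (i+1) * Nat.choose a (R-(i+1)) : ℤ) := by
  have h1 : Nat.choose (2^e + a) R
      = ∑ i ∈ Finset.range (R+1), Nat.choose (2^e) i * Nat.choose a (R-i) := by
    rw [Nat.add_choose_eq]
    rw [Finset.Nat.sum_antidiagonal_eq_sum_range_succ_mk]
  rw [Finset.sum_range_succ'] at h1
  have h2 : a + 2^e = 2^e + a := by omega
  rw [h2, h1]
  push_cast
  simp

lemma sum_exists_mul (c : ℚ) (s : Finset ℕ) (f : ℕ → ℚ)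
    (h : ∀ i ∈ s, ∃ z : ℤ, f i = c * (z:ℚ)) :
    ∃ z : ℤ, ∑ i ∈ s, f i = c * (z:ℚ) := by
  classical
  induction s using Finset.induction_on with
  | empty => exact ⟨0, by simp⟩
  | @insert a s ha ih =>
    obtain ⟨z1, hz1⟩ := h a (Finset.mem_insert_self a s)
    obtain ⟨z2, hz2⟩ := ih (fun i hi => h i (Finset.mem_insert_of_mem hi))
    refine ⟨z1 + z2, ?_⟩
    rw [Finset.sum_insert ha, hz1, hz2]
    push_cast
    ring

lemma sum_exists_int (s : Finset ℕ) (f : ℕ → ℚ)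
    (h : ∀ i ∈ s, ∃ z : ℤ, f i = (z:ℚ)) :
    ∃ z : ℤ, ∑ i ∈ s, f i = (z:ℚ) := by
  have := sum_exists_mul 1 s f (fun i hi => by
    obtain ⟨z, hz⟩ := h i hi; exact ⟨z, by rw [hz, one_mul]⟩)
  obtain ⟨z, hz⟩ := this
  exact ⟨z, by rw [hz, one_mul]⟩

include hy0 in
lemma Sfun_int (m k : ℕ) : ∃ z : ℤ, Sfun y m k = (z:ℚ) := by
  rw [Sfun_expand y hy0 m k]
  refine sum_exists_int _ _ fun i _ => ?_
  obtain ⟨z, hz⟩ := cW_div y hy0 m i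
  exact ⟨2^m * z * (Nat.choose (k+2*m) (2*m+i) : ℤ), by rw [hz]; push_cast; ring⟩

include hy0 in
lemma Sfun_periodic (m k e : ℕ) :
    ∃ z : ℤ, Sfun y m (k + 2^e) - Sfun y m k = 2^e * (z:ℚ) := by
  rw [Sfun_expand y hy0 m (k + 2^e), Sfun_expand y hy0 m k, ← Finset.sum_sub_distrib]
  refine sum_exists_mul _ _ _ fun i hi => ?_
  rw [Finset.mem_range] at hi
  obtain ⟨z, hz⟩ := cW_div y hy0 m i
  set a : ℕ := k + 2*m with haDef
  have harg : k + 2^e + 2*m = a + 2^e := by omega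
  rw [harg, hz]
  -- ℤ-level divisibility
  have hdvd : (2^e : ℤ) ∣ 2^m * ((Nat.choose (a + 2^e) (2*m+i) : ℤ) - (Nat.choose a (2*m+i) : ℤ)) := by
    rw [choose_diff a (2*m+i) e, Finset.mul_sum]
    refine Finset.dvd_sum fun j hj => ?_
    rw [Finset.mem_range] at hj
    have hj1 : j + 1 < 2^(m+1) := by
      have h3 := three_m_lt m
      omega
    have := two_pow_dvd e m (j+1) (by omega) hj1
    have hcast : (2^e : ℤ) ∣ (2^m * Nat.choose (2^e) (j+1) : ℤ) := by
      exact_mod_cast Int.natCast_dvd_natCast.mpr this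
    calc (2^e : ℤ) ∣ (2^m * Nat.choose (2^e) (j+1) : ℤ) := hcast
      _ ∣ 2^m * (Nat.choose (2^e) (j+1) * Nat.choose a (2*m+i-(j+1)) : ℤ) := ⟨Nat.choose a (2*m+i-(j+1)), by push_cast; ring⟩
  obtain ⟨D, hD⟩ := hdvd
  refine ⟨z * D, ?_⟩
  have hQ : (2:ℚ)^m * ((Nat.choose (a + 2^e) (2*m+i) : ℚ) - (Nat.choose a (2*m+i) : ℚ))
      = 2^e * (D:ℚ) := by exact_mod_cast congrArg (fun t : ℤ => (t:ℚ)) hD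
  push_cast at hQ ⊢
  linear_combination (z:ℚ) * hQ

include hy0 in
lemma Sfun_at_zero (m : ℕ) (hm : 1 ≤ m) : Sfun y m 0 = 0 := by
  rw [Sfun, pow_zero, PowerSeries.coeff_one, if_neg (by omega)]
  ring

noncomputable def TQ (y : ℕ → ℤ) (n k : ℕ) : ℚ := RinvQ y (k + 2*n) k

include hy0 in
lemma RinvQ_diag (k : ℕ) : RinvQ y (k+1) (k+1) = 1 := by
  rw [RinvQ, if_neg (by omega)]
  rw [Nat.sub_self, PowerSeries.coeff_zero_eq_constantCoeff, map_pow,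
    constCoeff_inv_UdivT y hy0, one_pow]
  have : (Nat.factorial (k+1-1) : ℚ) ≠ 0 := Nat.cast_ne_zero.mpr (Nat.factorial_ne_zero _)
  field_simp
  norm_num

include hy0 in
lemma TQ_zero (k : ℕ) : TQ y 0 (k+1) = 1 := by
  rw [TQ, show k+1+2*0 = k+1 by omega, RinvQ_diag y hy0]

include hy0 in
lemma TQ_rec (n k : ℕ) (hn : 1 ≤ n) :
    TQ y n (k+1) = - ∑ i ∈ Finset.range n,
      TQ y (n-(i+1)) (k+1+2*(i+1)) * Sfun y (i+1) (k+1) := by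
  have hstar := star y hy0 k n hn
  rw [Finset.sum_range_succ'] at hstar
  have h0 : RinvQ y (k+1+2*n) (k+1+2*0) * Sfun y 0 (k+1) = TQ y n (k+1) := by
    rw [Sfun_zero y hy0, mul_one, TQ, show k+1+2*0 = k+1 by omega]
  rw [h0] at hstar
  have h1 : ∑ i ∈ Finset.range n, RinvQ y (k+1+2*n) (k+1+2*(i+1)) * Sfun y (i+1) (k+1)
      = ∑ i ∈ Finset.range n, TQ y (n-(i+1)) (k+1+2*(i+1)) * Sfun y (i+1) (k+1) := by
    refine Finset.sum_congr rfl fun i hi => ?_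
    rw [Finset.mem_range] at hi
    rw [TQ, show k+1+2*(i+1) + 2*(n-(i+1)) = k+1+2*n by omega]
  rw [h1] at hstar
  linarith

include hy0 in
lemma TQ_int : ∀ n k : ℕ, ∃ z : ℤ, TQ y n (k+1) = (z:ℚ) := by
  intro n
  induction n using Nat.strong_induction_on with
  | _ n ih =>
    intro k
    cases n with
    | zero => exact ⟨1, by rw [TQ_zero y hy0]; norm_num⟩
    | succ n' =>
      rw [TQ_rec y hy0 (n'+1) k (by omega)]
      obtain ⟨z, hz⟩ := sum_exists_int (Finset.range (n'+1))
        (fun i => TQ y (n'+1-(i+1)) (k+1+2*(i+1)) * Sfun y (i+1) (k+1)) (fun i hi => by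
          rw [Finset.mem_range] at hi
          obtain ⟨z1, hz1⟩ := ih (n'+1-(i+1)) (by omega) (k+2*(i+1))
          obtain ⟨z2, hz2⟩ := Sfun_int y hy0 (i+1) (k+1)
          refine ⟨z1 * z2, ?_⟩
          rw [show k+1+2*(i+1) = (k+2*(i+1))+1 by omega, hz1, hz2]
          push_cast; ring)
      exact ⟨-z, by rw [hz]; push_cast; ring⟩

include hy0 in
lemma TQ_periodic (e : ℕ) : ∀ n k : ℕ,
    ∃ z : ℤ, TQ y n (k+1+2^e) - TQ y n (k+1) = 2^e * (z:ℚ) := by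
  intro n
  induction n using Nat.strong_induction_on with
  | _ n ih =>
    intro k
    cases n with
    | zero =>
      refine ⟨0, ?_⟩
      have h1 : TQ y 0 (k+1+2^e) = 1 := by
        rw [show k+1+2^e = (k+2^e)+1 by omega, TQ_zero y hy0]
      rw [h1, TQ_zero y hy0]
      norm_num
    | succ n' =>
      have hr1 : TQ y (n'+1) (k+1+2^e) = - ∑ i ∈ Finset.range (n'+1),
          TQ y (n'+1-(i+1)) ((k+2^e)+1+2*(i+1)) * Sfun y (i+1) ((k+2^e)+1) := by
        rw [show k+1+2^e = (k+2^e)+1 by omega]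
        exact TQ_rec y hy0 (n'+1) (k+2^e) (by omega)
      have hr2 := TQ_rec y hy0 (n'+1) k (by omega)
      rw [hr1, hr2]
      have hterm : ∀ i ∈ Finset.range (n'+1), ∃ z : ℤ,
          TQ y (n'+1-(i+1)) ((k+2^e)+1+2*(i+1)) * Sfun y (i+1) ((k+2^e)+1)
            - TQ y (n'+1-(i+1)) (k+1+2*(i+1)) * Sfun y (i+1) (k+1) = 2^e * (z:ℚ) := by
        intro i hi
        rw [Finset.mem_range] at hi
        obtain ⟨zA, hzA⟩ := TQ_int y hy0 (n'+1-(i+1)) (k+2^e+2*(i+1))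
        obtain ⟨zS, hzS⟩ := Sfun_int y hy0 (i+1) (k+1)
        obtain ⟨zP, hzP⟩ := ih (n'+1-(i+1)) (by omega) (k+2*(i+1))
        obtain ⟨zQ, hzQ⟩ := Sfun_periodic y hy0 (i+1) (k+1) e
        refine ⟨zA * zQ + zP * zS, ?_⟩
        have e1 : (k+2^e)+1+2*(i+1) = (k+2^e+2*(i+1))+1 := by omega
        have e2 : (k+2^e)+1 = (k+1)+2^e := by omega
        have e4 : k+1+2*(i+1) = (k+2*(i+1))+1 := by omega
        rw [e1, e2, e4]
        have hAiff : TQ y (n'+1-(i+1)) ((k+2^e+2*(i+1))+1)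
            - TQ y (n'+1-(i+1)) ((k+2*(i+1))+1) = 2^e * (zP:ℚ) := by
          rw [show (k+2^e+2*(i+1))+1 = (k+2*(i+1))+1+2^e by omega]
          exact hzP
        have eN : n'+1-(i+1) = n'-i := by omega
        rw [eN] at hzA hAiff ⊢
        push_cast
        linear_combination TQ y (n'-i) ((k+2^e+2*(i+1))+1) * hzQ
          + Sfun y (i+1) (k+1) * hAiff + ((2:ℚ)^e*(zQ:ℚ)) * hzA + ((2:ℚ)^e*(zP:ℚ)) * hzS
      obtain ⟨z, hz⟩ := sum_exists_mul ((2:ℚ)^e) (Finset.range (n'+1)) _ hterm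
      refine ⟨-z, ?_⟩
      rw [Finset.sum_sub_distrib] at hz
      push_cast at hz ⊢
      linarith [hz]

include hy0 in
lemma TQ_col_zero (n e : ℕ) (hn : 1 ≤ n) :
    ∃ z : ℤ, RinvQ y (2^e + 2*n) (2^e) = 2^e * (z:ℚ) := by
  set K : ℕ := 2^e - 1 with hK
  have he2 : 1 ≤ 2^e := Nat.one_le_two_pow
  have hKe : K + 1 = 2^e := by omega
  have hT : RinvQ y (2^e + 2*n) (2^e) = TQ y n (K+1) := by
    rw [TQ, hKe]
  rw [hT, TQ_rec y hy0 n K hn]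
  have hterm : ∀ i ∈ Finset.range n, ∃ z : ℤ,
      TQ y (n-(i+1)) (K+1+2*(i+1)) * Sfun y (i+1) (K+1) = 2^e * (z:ℚ) := by
    intro i hi
    obtain ⟨zA, hzA⟩ := TQ_int y hy0 (n-(i+1)) (K+2*(i+1))
    obtain ⟨zS, hzS⟩ := Sfun_periodic y hy0 (i+1) 0 e
    rw [Sfun_at_zero y hy0 (i+1) (by omega), sub_zero] at hzS
    refine ⟨zA * zS, ?_⟩
    rw [show K+1+2*(i+1) = (K+2*(i+1))+1 by omega, hzA,
      show K+1 = 0 + 2^e by omega, hzS]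
    push_cast
    ring
  obtain ⟨z, hz⟩ := sum_exists_mul ((2:ℚ)^e) (Finset.range n) _ hterm
  exact ⟨-z, by rw [hz]; push_cast; ring⟩

end main

theorem romik_Rinv_periodic_mod_two_pow
    (y : ℕ → ℤ) (hy0 : y 0 = 1) (n : ℕ) (e : ℕ) (he : 1 ≤ e) :
    ∀ k : ℕ, ∃ z : ℤ,
      RinvQ y (k + 2 ^ e + 2 * n) (k + 2 ^ e) - RinvQ y (k + 2 * n) k = 2 ^ e * (z : ℚ) := by
  intro k
  cases k with
  | succ k' =>
    obtain ⟨z, hz⟩ := TQ_periodic y hy0 e n k'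
    exact ⟨z, hz⟩
  | zero =>
    simp only [Nat.zero_add]
    cases n with
    | zero =>
      refine ⟨0, ?_⟩
      have he2 : 1 ≤ 2^e := Nat.one_le_two_pow
      have h1 : RinvQ y (2^e + 2*0) (2^e) = 1 := by
        rw [show 2^e + 2*0 = (2^e - 1) + 1 by omega, show 2^e = (2^e - 1)+1 by omega]
        exact RinvQ_diag y hy0 _
      have h2 : RinvQ y (2*0) 0 = 1 := by
        rw [RinvQ]; norm_num
      rw [h1, h2]
      norm_num
    | succ n' =>
      have h2 : RinvQ y (2*(n'+1)) 0 = 0 := by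
        rw [RinvQ, if_pos rfl, if_neg (by omega)]
      obtain ⟨z, hz⟩ := TQ_col_zero y hy0 (n'+1) e (by omega)
      exact ⟨z, by rw [h2, hz]; ring⟩
end
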